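/- Let G = (V, E) be a finite, strongly connected directed network with arc capacities c : E → ℝ and imports b : V → ℝ. Suppose that ∑_{v ∈ V} b(v) = 0 and that c(e) ≥ 2 · ∑_{v ∈ V} max(b(v), 0) for every arc e ∈ E. Then there exists a feasible flow on G. -/

import Mathlib

open Classical

section Aux

variable {V : Type*}

private lemma map_fst_zip_tail : ∀ (l : List V), (l.zip l.tail).map Prod.fst = l.dropLast
  | [] => rfl
  | [_] => rfl
  | a :: b :: t => by
      have ih := map_fst_zip_tail (b :: t)
      simp only [List.tail_cons, List.zip_cons_cons, List.map_cons, List.dropLast_cons₂]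
      rw [← ih]; rfl

private lemma mem_zip_tail_of_chain' {R : V → V → Prop} :
    ∀ {l : List V}, l.Chain' R → ∀ {p : V × V}, p ∈ l.zip l.tail → R p.1 p.2
  | [], _, _, h => by simp at h
  | [_], _, _, h => by simp at h
  | a :: b :: t, hc, p, h => by
      replace hc := List.isChain_cons_cons.mp hc
      rcases (by simpa using h : p = (a, b) ∨ p ∈ (b :: t).zip t) with rfl | h2
      · exact hc.1
      · exact mem_zip_tail_of_chain' hc.2 h2

private lemma exists_nodup_chain {R : V → V → Prop} {s t : V}
    (h : Relation.ReflTransGen R s t) :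
    ∃ l : List V, l.Chain' R ∧ l.Nodup ∧ l.head? = some s ∧ l.getLast? = some t := by
  induction h using Relation.ReflTransGen.head_induction_on with
  | refl => exact ⟨[t], List.isChain_singleton _, by simp, rfl, rfl⟩
  | head hab _ ih =>
    obtain ⟨l, hc, hnd, hh, hl⟩ := ih
    rename_i a c hbt
    by_cases ha : a ∈ l
    · obtain ⟨p, q, rfl⟩ := List.append_of_mem ha
      refine ⟨a :: q, hc.suffix ⟨p, rfl⟩,
        (show (a :: q) <:+ p ++ a :: q from ⟨p, rfl⟩).sublist.nodup hnd, rfl, ?_⟩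
      rw [← hl, List.getLast?_append_of_ne_nil _ (by simp)]
    · cases l with
      | nil => simp at hh
      | cons x m =>
        obtain rfl : x = c := by simpa using hh
        exact ⟨a :: x :: m, List.isChain_cons_cons.mpr ⟨hab, hc⟩,
          List.nodup_cons.mpr ⟨ha, hnd⟩, rfl, by rw [List.getLast?_cons_cons]; exact hl⟩

private lemma sum_ite_mem_snd [Fintype V] (L : List (V × V)) (hL : L.Nodup) (v : V) :
    ∑ u : V, (if (u, v) ∈ L then (1 : ℝ) else 0)
      = L.countP (fun e => decide (e.2 = v)) := by
  have h1 : ∑ u : V, (if (u, v) ∈ L then (1 : ℝ) else 0)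
      = ((Finset.univ.filter fun u : V => (u, v) ∈ L).card : ℝ) := by
    rw [Finset.sum_boole]
  have h2 : (Finset.univ.filter fun u : V => (u, v) ∈ L).card
      = (L.filter fun e => decide (e.2 = v)).length := by
    rw [← List.toFinset_card_of_nodup (hL.filter _)]
    apply Finset.card_bij (fun u _ => (u, v))
    · intro u hu
      simp only [Finset.mem_filter, Finset.mem_univ, true_and] at hu
      simp [List.mem_filter, hu]
    · intro u1 h1 u2 h2 h
      simpa using h
    · intro e he
      simp only [List.mem_toFinset, List.mem_filter, decide_eq_true_eq] at he
      have hev : (e.1, v) = e := by rw [← he.2]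
      refine ⟨e.1, ?_, hev⟩
      simp only [Finset.mem_filter, Finset.mem_univ, true_and]
      rw [hev]; exact he.1
  rw [h1, h2, List.countP_eq_length_filter]

private lemma sum_ite_mem_fst [Fintype V] (L : List (V × V)) (hL : L.Nodup) (v : V) :
    ∑ w : V, (if (v, w) ∈ L then (1 : ℝ) else 0)
      = L.countP (fun e => decide (e.1 = v)) := by
  have h1 : ∑ w : V, (if (v, w) ∈ L then (1 : ℝ) else 0)
      = ((Finset.univ.filter fun w : V => (v, w) ∈ L).card : ℝ) := by
    rw [Finset.sum_boole]
  have h2 : (Finset.univ.filter fun w : V => (v, w) ∈ L).card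
      = (L.filter fun e => decide (e.1 = v)).length := by
    rw [← List.toFinset_card_of_nodup (hL.filter _)]
    apply Finset.card_bij (fun w _ => (v, w))
    · intro w hw
      simp only [Finset.mem_filter, Finset.mem_univ, true_and] at hw
      simp [List.mem_filter, hw]
    · intro u1 h1 u2 h2 h
      simpa using h
    · intro e he
      simp only [List.mem_toFinset, List.mem_filter, decide_eq_true_eq] at he
      have hev : (v, e.2) = e := by rw [← he.2]
      refine ⟨e.2, ?_, hev⟩
      simp only [Finset.mem_filter, Finset.mem_univ, true_and]
      rw [hev]; exact he.1
  rw [h1, h2, List.countP_eq_length_filter]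

private lemma path_balance [Fintype V] {l : List V} {s t : V}
    (hnd : l.Nodup) (hh : l.head? = some s) (hl : l.getLast? = some t) (v : V) :
    (∑ u : V, if (u, v) ∈ l.zip l.tail then (1 : ℝ) else 0)
      - (∑ w : V, if (v, w) ∈ l.zip l.tail then (1 : ℝ) else 0)
    = (if t = v then 1 else 0) - (if s = v then 1 else 0) := by
  have hmapf : (l.zip l.tail).map Prod.fst = l.dropLast := map_fst_zip_tail l
  have hmaps : (l.zip l.tail).map Prod.snd = l.tail :=
    List.map_snd_zip (by rw [List.length_tail]; omega)
  have hndz : (l.zip l.tail).Nodup := by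
    have : ((l.zip l.tail).map Prod.fst).Nodup := by
      rw [hmapf]; exact (List.dropLast_sublist l).nodup hnd
    exact this.of_map _
  rw [sum_ite_mem_snd _ hndz, sum_ite_mem_fst _ hndz]
  have c1 : (l.zip l.tail).countP (fun e => decide (e.2 = v))
      = l.tail.countP (fun x => decide (x = v)) := by
    have h := List.countP_map (p := fun x => decide (x = v)) (f := Prod.snd) (l := l.zip l.tail)
    rw [hmaps] at h
    exact h.symm
  have c2 : (l.zip l.tail).countP (fun e => decide (e.1 = v))
      = l.dropLast.countP (fun x => decide (x = v)) := by
    have h := List.countP_map (p := fun x => decide (x = v)) (f := Prod.fst) (l := l.zip l.tail)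
    rw [hmapf] at h
    exact h.symm
  rw [c1, c2]
  -- now a pure counting fact about nonempty lists
  cases l with
  | nil => simp at hh
  | cons x m =>
    obtain rfl : x = s := by simpa using hh
    have hne : (x :: m) ≠ [] := by simp
    have ht : (x :: m).getLast hne = t := by
      rwa [List.getLast?_eq_getLast hne, Option.some_inj] at hl
    have e2 : (x :: m).countP (fun y => decide (y = v))
        = (x :: m).dropLast.countP (fun y => decide (y = v))
          + (if t = v then 1 else 0) := by
      conv_lhs => rw [← List.dropLast_append_getLast hne]
      rw [List.countP_append, ht]
      by_cases h : t = v <;> simp [h, List.countP_cons]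
    have e1 : (x :: m).countP (fun y => decide (y = v))
        = m.countP (fun y => decide (y = v)) + (if x = v then 1 else 0) := by
      rw [List.countP_cons]
      by_cases h : x = v <;> simp [h]
    have key : m.countP (fun y => decide (y = v)) + (if x = v then (1:ℕ) else 0)
        = (x :: m).dropLast.countP (fun y => decide (y = v))
          + (if t = v then 1 else 0) := by omega
    have keyR : (m.countP (fun y => decide (y = v)) : ℝ) + (if x = v then (1:ℝ) else 0)
        = ((x :: m).dropLast.countP (fun y => decide (y = v)) : ℝ)
          + (if t = v then 1 else 0) := by exact_mod_cast key
    simp only [List.tail_cons]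
    linarith [keyR]

private lemma sum_mul_ite_sub [Fintype V] (g : V → ℝ) (v r : V) :
    ∑ w, g w * ((if r = v then (1:ℝ) else 0) - (if w = v then 1 else 0))
      = (if r = v then (1:ℝ) else 0) * (∑ w, g w) - g v := by
  simp only [mul_sub]
  rw [Finset.sum_sub_distrib]
  congr 1
  · rw [Finset.mul_sum]
    exact Finset.sum_congr rfl fun w _ => mul_comm _ _
  · simp [mul_ite, Finset.sum_ite_eq']

end Aux

open Classical in
/-- In a finite, strongly connected directed network with imports summing to zero
and every arc capacity at least twice the total supply, a feasible flow exists. -/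
theorem stmt_1 {V : Type*} [Fintype V]
    (E : Set (V × V)) (c : V × V → ℝ) (b : V → ℝ)
    (hconn : ∀ u v : V, Relation.ReflTransGen (fun a b => (a, b) ∈ E) u v)
    (hcap : ∀ e ∈ E, 0 ≤ c e)
    (hbsum : ∑ v, b v = 0)
    (hc : ∀ e ∈ E, 2 * ∑ v, max (b v) 0 ≤ c e) :
    ∃ f : V × V → ℝ,
      (∀ e ∈ E, 0 ≤ f e ∧ f e ≤ c e) ∧
      ∀ v : V, b v + (∑ u, if (u, v) ∈ E then f (u, v) else 0)
        - (∑ w, if (v, w) ∈ E then f (v, w) else 0) = 0 := by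
  classical
  cases isEmpty_or_nonempty V with
  | inl hE => exact ⟨0, fun e _ => (hE.false e.1).elim, fun v => (hE.false v).elim⟩
  | inr hne =>
  obtain ⟨r⟩ := hne
  choose Pout hPc hPn hPh hPl using fun v : V => exists_nodup_chain (hconn v r)
  choose Pin hQc hQn hQh hQl using fun v : V => exists_nodup_chain (hconn r v)
  set a : V → ℝ := fun v => max (b v) 0 with ha
  set d : V → ℝ := fun v => max (-b v) 0 with hd
  have hav : ∀ v, 0 ≤ a v := fun v => le_max_right _ _
  have hdv : ∀ v, 0 ≤ d v := fun v => le_max_right _ _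
  have hab : ∀ v, a v - d v = b v := by
    intro v
    rcases le_total (b v) 0 with h | h
    · simp [ha, hd, max_eq_right h, max_eq_left (neg_nonneg.mpr h)]
    · simp [ha, hd, max_eq_left h, max_eq_right (neg_nonpos.mpr h)]
  have hsumad : ∑ v, a v = ∑ v, d v := by
    have h0 : ∑ v, (a v - d v) = 0 := by
      rw [Finset.sum_congr rfl fun v _ => hab v]; exact hbsum
    rw [Finset.sum_sub_distrib] at h0
    linarith
  have hsa : ∑ v, a v = ∑ v, max (b v) 0 := rfl
  set f : V × V → ℝ := fun e =>
    (∑ w, a w * (if e ∈ (Pout w).zip (Pout w).tail then 1 else 0))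
    + (∑ w, d w * (if e ∈ (Pin w).zip (Pin w).tail then 1 else 0)) with hf
  have hf0 : ∀ e : V × V, e ∉ E → f e = 0 := by
    intro e he
    have h1 : ∀ w, (if e ∈ (Pout w).zip (Pout w).tail then (1:ℝ) else 0) = 0 := by
      intro w
      rw [if_neg]
      intro hm
      exact he (by simpa using mem_zip_tail_of_chain' (hPc w) hm)
    have h2 : ∀ w, (if e ∈ (Pin w).zip (Pin w).tail then (1:ℝ) else 0) = 0 := by
      intro w
      rw [if_neg]
      intro hm
      exact he (by simpa using mem_zip_tail_of_chain' (hQc w) hm)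
    simp only [hf, h1, h2, mul_zero, add_zero, Finset.sum_const_zero]
  refine ⟨f, ?_, ?_⟩
  · intro e he
    constructor
    · apply add_nonneg <;>
        exact Finset.sum_nonneg fun w _ =>
          mul_nonneg (by first | exact hav w | exact hdv w) (by positivity)
    · have hb1 : (∑ w, a w * (if e ∈ (Pout w).zip (Pout w).tail then (1:ℝ) else 0))
          ≤ ∑ w, a w :=
        Finset.sum_le_sum fun w _ => by
          by_cases h : e ∈ (Pout w).zip (Pout w).tail <;> simp [h, hav w]
      have hb2 : (∑ w, d w * (if e ∈ (Pin w).zip (Pin w).tail then (1:ℝ) else 0))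
          ≤ ∑ w, d w :=
        Finset.sum_le_sum fun w _ => by
          by_cases h : e ∈ (Pin w).zip (Pin w).tail <;> simp [h, hdv w]
      have : f e ≤ 2 * ∑ v, max (b v) 0 := by
        rw [hf]
        calc (∑ w, a w * (if e ∈ (Pout w).zip (Pout w).tail then (1:ℝ) else 0))
              + (∑ w, d w * (if e ∈ (Pin w).zip (Pin w).tail then 1 else 0))
            ≤ (∑ w, a w) + (∑ w, d w) := add_le_add hb1 hb2
          _ = 2 * ∑ v, max (b v) 0 := by rw [← hsumad, ← hsa]; ring
      exact this.trans (hc e he)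
  · intro v
    have hin : (∑ u, if (u, v) ∈ E then f (u, v) else 0) = ∑ u, f (u, v) :=
      Finset.sum_congr rfl fun u _ => by
        by_cases h : (u, v) ∈ E
        · simp [h]
        · simp [h, hf0 _ h]
    have hout : (∑ w, if (v, w) ∈ E then f (v, w) else 0) = ∑ w, f (v, w) :=
      Finset.sum_congr rfl fun w _ => by
        by_cases h : (v, w) ∈ E
        · simp [h]
        · simp [h, hf0 _ h]
    have hIn : ∑ u, f (u, v)
        = (∑ w, a w * (∑ u, if ((u, v) : V × V) ∈ (Pout w).zip (Pout w).tail then (1:ℝ) else 0))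
          + (∑ w, d w * (∑ u, if ((u, v) : V × V) ∈ (Pin w).zip (Pin w).tail then (1:ℝ) else 0)) := by
      simp only [hf]
      rw [Finset.sum_add_distrib]
      congr 1
      · rw [Finset.sum_comm]
        exact Finset.sum_congr rfl fun w _ => (Finset.mul_sum _ _ _).symm
      · rw [Finset.sum_comm]
        exact Finset.sum_congr rfl fun w _ => (Finset.mul_sum _ _ _).symm
    have hOut : ∑ x, f (v, x)
        = (∑ w, a w * (∑ x, if ((v, x) : V × V) ∈ (Pout w).zip (Pout w).tail then (1:ℝ) else 0))
          + (∑ w, d w * (∑ x, if ((v, x) : V × V) ∈ (Pin w).zip (Pin w).tail then (1:ℝ) else 0)) := by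
      simp only [hf]
      rw [Finset.sum_add_distrib]
      congr 1
      · rw [Finset.sum_comm]
        exact Finset.sum_congr rfl fun w _ => (Finset.mul_sum _ _ _).symm
      · rw [Finset.sum_comm]
        exact Finset.sum_congr rfl fun w _ => (Finset.mul_sum _ _ _).symm
    have hXa : (∑ w, a w * (∑ u, if ((u, v) : V × V) ∈ (Pout w).zip (Pout w).tail then (1:ℝ) else 0))
        - (∑ w, a w * (∑ x, if ((v, x) : V × V) ∈ (Pout w).zip (Pout w).tail then (1:ℝ) else 0))
        = ∑ w, a w * ((if r = v then (1:ℝ) else 0) - (if w = v then 1 else 0)) := by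
      rw [← Finset.sum_sub_distrib]
      exact Finset.sum_congr rfl fun w _ => by
        rw [← mul_sub, path_balance (hPn w) (hPh w) (hPl w) v]
    have hXd : (∑ w, d w * (∑ u, if ((u, v) : V × V) ∈ (Pin w).zip (Pin w).tail then (1:ℝ) else 0))
        - (∑ w, d w * (∑ x, if ((v, x) : V × V) ∈ (Pin w).zip (Pin w).tail then (1:ℝ) else 0))
        = ∑ w, d w * ((if w = v then (1:ℝ) else 0) - (if r = v then 1 else 0)) := by
      rw [← Finset.sum_sub_distrib]
      exact Finset.sum_congr rfl fun w _ => by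
        rw [← mul_sub, path_balance (hQn w) (hQh w) (hQl w) v]
    have hsum_a := sum_mul_ite_sub a v r
    have hsum_d : ∑ w, d w * ((if w = v then (1:ℝ) else 0) - (if r = v then 1 else 0))
        = d v - (if r = v then (1:ℝ) else 0) * (∑ w, d w) := by
      have := sum_mul_ite_sub d v r
      have hneg : ∑ w, d w * ((if w = v then (1:ℝ) else 0) - (if r = v then 1 else 0))
          = - ∑ w, d w * ((if r = v then (1:ℝ) else 0) - (if w = v then 1 else 0)) := by
        rw [← Finset.sum_neg_distrib]
        exact Finset.sum_congr rfl fun w _ => by ring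
      rw [hneg, this]; ring
    rw [hin, hout, hIn, hOut]
    have habv := hab v
    have : (if r = v then (1:ℝ) else 0) * (∑ w, a w)
        = (if r = v then (1:ℝ) else 0) * (∑ w, d w) := by rw [hsumad]
    linarith [hXa, hXd, hsum_a, hsum_d]
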